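/- The set 𝒦 ⊆ ℝ^{n(n−1)/2} of weight systems, defined by a_{i,i+1}+a_{i+1,i+2} ≥ a_{i,i+2} (1 ≤ i ≤ n−2) and a_{i,j}+a_{i+1,j+1} ≥ a_{i,j+1}+a_{i+1,j} (1 ≤ i < j−1 ≤ n−2), is the product (direct sum) of the linear subspace L of dimension n−1 given by a_{i,j} = a_{i,i+1}+…+a_{j−1,j} for all i < j, and a simplicial cone of dimension (n−1)(n−2)/2 given by a_{i,i+1} = 0 for all i together with the inequalities (a) and (b). In particular 𝒦 is a full-dimensional polyhedral cone in ℝ^{n(n−1)/2} and its lineality space is L. -/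

import Mathlib

open Finset Pointwise

/-- Index type for the coordinates `a_{i,j}`, `1 ≤ i < j ≤ n` (realized 0-indexed). -/
abbrev WPair (n : ℕ) := {p : Fin n × Fin n // p.1 < p.2}

/-- The entry `a_{i,j}` of `x` for `1 ≤ i < j ≤ n` (and `0` for invalid indices). -/
def ent (n : ℕ) (x : WPair n → ℝ) (i j : ℕ) : ℝ :=
  if h : 1 ≤ i ∧ i < j ∧ j ≤ n then
    x ⟨(⟨i - 1, by omega⟩, ⟨j - 1, by omega⟩), by
      simp only [Fin.mk_lt_mk]; omega⟩
  else 0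

/-- The cone `𝒦` of weight systems: conditions (a) and (b). -/
def Kcone (n : ℕ) : Set (WPair n → ℝ) :=
  {x | (∀ i, 1 ≤ i → i + 2 ≤ n →
          ent n x i (i+2) ≤ ent n x i (i+1) + ent n x (i+1) (i+2)) ∧
       (∀ i j, 1 ≤ i → i + 1 < j → j + 1 ≤ n →
          ent n x i (j+1) + ent n x (i+1) j ≤ ent n x i j + ent n x (i+1) (j+1))}

/-- The linear subspace `L`: `a_{i,j} = a_{i,i+1} + … + a_{j-1,j}` for all `i < j`. -/
def Lset (n : ℕ) : Set (WPair n → ℝ) :=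
  {x | ∀ i j, 1 ≤ i → i < j → j ≤ n →
    ent n x i j = ∑ t ∈ Finset.Ico i j, ent n x t (t+1)}

/-- The cone cut out inside `𝒦` by `a_{i,i+1} = 0` for all `i`. -/
def C0set (n : ℕ) : Set (WPair n → ℝ) :=
  {x | x ∈ Kcone n ∧ ∀ i, 1 ≤ i → i + 1 ≤ n → ent n x i (i+1) = 0}

/-- `𝒦` is the product of the `(n-1)`-dimensional linear subspace `L` and a simplicial
cone of dimension `(n-1)(n-2)/2`; it is a full-dimensional polyhedral cone with
lineality space `L`. -/
lemma ent_invalid {n : ℕ} (x : WPair n → ℝ) {i j : ℕ} (h : ¬ (1 ≤ i ∧ i < j ∧ j ≤ n)) :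
    ent n x i j = 0 := dif_neg h

def entL (n i j : ℕ) : (WPair n → ℝ) →ₗ[ℝ] ℝ where
  toFun x := ent n x i j
  map_add' x y := by unfold ent; split_ifs <;> simp
  map_smul' c x := by unfold ent; split_ifs <;> simp

lemma entL_apply {n : ℕ} (x : WPair n → ℝ) (i j : ℕ) : entL n i j x = ent n x i j := rfl

lemma ent_add {n : ℕ} (x y : WPair n → ℝ) (i j : ℕ) :
    ent n (x + y) i j = ent n x i j + ent n y i j := map_add (entL n i j) x y

lemma ent_sub {n : ℕ} (x y : WPair n → ℝ) (i j : ℕ) :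
    ent n (x - y) i j = ent n x i j - ent n y i j := map_sub (entL n i j) x y

lemma ent_neg {n : ℕ} (x : WPair n → ℝ) (i j : ℕ) :
    ent n (-x) i j = -ent n x i j := map_neg (entL n i j) x

lemma ent_smul {n : ℕ} (c : ℝ) (x : WPair n → ℝ) (i j : ℕ) :
    ent n (c • x) i j = c * ent n x i j := map_smul (entL n i j) c x

lemma ent_zero {n : ℕ} (i j : ℕ) : ent n (0 : WPair n → ℝ) i j = 0 := map_zero (entL n i j)

lemma ent_sum {n : ℕ} {α : Type*} (s : Finset α) (f : α → WPair n → ℝ) (i j : ℕ) :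
    ent n (∑ a ∈ s, f a) i j = ∑ a ∈ s, ent n (f a) i j := map_sum (entL n i j) f s

lemma ent_apply {n : ℕ} (x : WPair n → ℝ) (q : WPair n) :
    ent n x (q.1.1.val + 1) (q.1.2.val + 1) = x q := by
  rcases q with ⟨⟨a, b⟩, hab⟩
  have hab' : a.val < b.val := hab
  have hv : 1 ≤ a.val + 1 ∧ a.val + 1 < b.val + 1 ∧ b.val + 1 ≤ n := by
    refine ⟨by omega, by omega, by have := b.isLt; omega⟩
  rw [ent, dif_pos hv]
  norm_num

/-- Two vectors with the same entries are equal. -/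
lemma eq_of_ent_eq {n : ℕ} {x y : WPair n → ℝ}
    (h : ∀ i j, ent n x i j = ent n y i j) : x = y := by
  funext q
  rw [← ent_apply x q, ← ent_apply y q, h]

lemma eq_zero_of_ent_zero {n : ℕ} {x : WPair n → ℝ}
    (h : ∀ i j, ent n x i j = 0) : x = 0 :=
  eq_of_ent_eq fun i j => by rw [h, ent_zero]

/-- The second-difference functional `D_{p,q}`. -/
def Dv (n p q : ℕ) (x : WPair n → ℝ) : ℝ :=
  ent n x p q + ent n x (p+1) (q+1) - ent n x p (q+1) - ent n x (p+1) q

lemma Dv_sub {n p q : ℕ} (x y : WPair n → ℝ) :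
    Dv n p q (x - y) = Dv n p q x - Dv n p q y := by
  simp only [Dv, ent_sub]; ring

lemma Dv_neg {n p q : ℕ} (x : WPair n → ℝ) : Dv n p q (-x) = -Dv n p q x := by
  simp only [Dv, ent_neg]; ring

lemma Dv_add {n p q : ℕ} (x y : WPair n → ℝ) :
    Dv n p q (x + y) = Dv n p q x + Dv n p q y := by
  simp only [Dv, ent_add]; ring

lemma Dv_smul {n p q : ℕ} (c : ℝ) (x : WPair n → ℝ) :
    Dv n p q (c • x) = c * Dv n p q x := by
  simp only [Dv, ent_smul]; ring

lemma Dv_sum {n p q : ℕ} {α : Type*} (s : Finset α) (f : α → WPair n → ℝ) :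
    Dv n p q (∑ a ∈ s, f a) = ∑ a ∈ s, Dv n p q (f a) := by
  simp only [Dv, ent_sum, Finset.sum_add_distrib, Finset.sum_sub_distrib]

/-- Membership in `Kcone` in terms of the functionals `Dv`. -/
lemma mem_K_iff {n : ℕ} (x : WPair n → ℝ) :
    x ∈ Kcone n ↔ ∀ p q, 1 ≤ p → p < q → q + 1 ≤ n → 0 ≤ Dv n p q x := by
  constructor
  · rintro ⟨ha, hb⟩ p q h1 h2 h3
    rcases eq_or_lt_of_le (by omega : p + 1 ≤ q) with h | h
    · -- q = p + 1
      subst h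
      have := ha p h1 (by omega)
      have hz : ent n x (p+1) (p+1) = 0 := ent_invalid x (by omega)
      unfold Dv
      rw [hz]
      linarith
    · -- p + 1 < q
      have := hb p q h1 (by omega) (by omega)
      unfold Dv
      linarith
  · intro hD
    constructor
    · intro i h1 h2
      have := hD i (i+1) h1 (by omega) (by omega)
      have hz : ent n x (i+1) (i+1) = 0 := ent_invalid x (by omega)
      unfold Dv at this
      rw [hz] at this
      linarith
    · intro i j h1 h2 h3
      have := hD i j h1 (by omega) (by omega)
      unfold Dv at this
      linarith

/-- In `Lset`, entries are sums of diagonal entries (also for `i = j` and invalid cases). -/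
lemma lset_ent {n : ℕ} {l : WPair n → ℝ} (hl : l ∈ Lset n) {i j : ℕ}
    (h1 : 1 ≤ i) (h2 : i ≤ j) (h3 : j ≤ n) :
    ent n l i j = ∑ t ∈ Finset.Ico i j, ent n l t (t+1) := by
  rcases eq_or_lt_of_le h2 with h | h
  · subst h
    rw [Finset.Ico_self, Finset.sum_empty, ent_invalid l (by omega)]
  · exact hl i j h1 h h3

lemma lset_Dv {n : ℕ} {l : WPair n → ℝ} (hl : l ∈ Lset n) {p q : ℕ}
    (h1 : 1 ≤ p) (h2 : p < q) (h3 : q + 1 ≤ n) : Dv n p q l = 0 := by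
  unfold Dv
  rw [lset_ent hl (i := p) (j := q) h1 (le_of_lt h2) (by omega),
      lset_ent hl (i := p+1) (j := q+1) (by omega) (by omega) h3,
      lset_ent hl (i := p) (j := q+1) h1 (by omega) h3,
      lset_ent hl (i := p+1) (j := q) (by omega) h2 (by omega),
      Finset.sum_Ico_succ_top (by omega : p ≤ q),
      Finset.sum_Ico_succ_top (by omega : p + 1 ≤ q)]
  ring

/-- Projection onto `Lset` determined by the diagonal entries. -/
def Pl (n : ℕ) (x : WPair n → ℝ) : WPair n → ℝ :=
  fun q => ∑ t ∈ Finset.Ico (q.1.1.val + 1) (q.1.2.val + 1), ent n x t (t+1)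

lemma ent_Pl {n : ℕ} (x : WPair n → ℝ) {i j : ℕ} (h : 1 ≤ i ∧ i < j ∧ j ≤ n) :
    ent n (Pl n x) i j = ∑ t ∈ Finset.Ico i j, ent n x t (t+1) := by
  rw [ent, dif_pos h]
  show ∑ t ∈ Finset.Ico ((i-1) + 1) ((j-1) + 1), ent n x t (t+1) = _
  have e1 : i - 1 + 1 = i := by omega
  have e2 : j - 1 + 1 = j := by omega
  rw [e1, e2]

lemma Pl_mem_Lset {n : ℕ} (x : WPair n → ℝ) : Pl n x ∈ Lset n := by
  intro i j h1 h2 h3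
  rw [ent_Pl x ⟨h1, h2, h3⟩]
  refine Finset.sum_congr rfl fun t ht => ?_
  rw [Finset.mem_Ico] at ht
  rw [ent_Pl x ⟨by omega, by omega, by omega⟩, Nat.Ico_succ_singleton, Finset.sum_singleton]

lemma Pl_diag {n : ℕ} (x : WPair n → ℝ) {t : ℕ} (h1 : 1 ≤ t) (h2 : t + 1 ≤ n) :
    ent n (Pl n x) t (t+1) = ent n x t (t+1) := by
  rw [ent_Pl x ⟨h1, by omega, h2⟩, Nat.Ico_succ_singleton, Finset.sum_singleton]

/-- Uniqueness: a vector with zero diagonal and zero second differences is zero. -/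
lemma master {n : ℕ} {y : WPair n → ℝ}
    (hd : ∀ i, 1 ≤ i → i + 1 ≤ n → ent n y i (i+1) = 0)
    (hD : ∀ p q, 1 ≤ p → p < q → q + 1 ≤ n → Dv n p q y = 0) :
    ∀ i j, ent n y i j = 0 := by
  have H : ∀ k, ∀ i j, j ≤ i + k → ent n y i j = 0 := by
    intro k
    induction k with
    | zero => intro i j h; exact ent_invalid y (by omega)
    | succ k ih =>
      intro i j hle
      by_cases hv : 1 ≤ i ∧ i < j ∧ j ≤ n
      · obtain ⟨h1, h2, h3⟩ := hv
        by_cases hk : j ≤ i + k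
        · exact ih i j hk
        · -- j = i + k + 1
          rcases Nat.eq_zero_or_pos k with hk0 | hk0
          · have : j = i + 1 := by omega
            subst this
            exact hd i h1 h3
          · have hD' := hD i (j-1) h1 (by omega) (by omega)
            have hj : j - 1 + 1 = j := by omega
            unfold Dv at hD'
            rw [hj] at hD'
            have e1 : ent n y i (j-1) = 0 := ih i (j-1) (by omega)
            have e2 : ent n y (i+1) j = 0 := ih (i+1) j (by omega)
            have e3 : ent n y (i+1) (j-1) = 0 := ih (i+1) (j-1) (by omega)
            linarith
      · exact ent_invalid y hv
  intro i j
  exact H j i j (by omega)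

/-- Basis vectors of `L`. -/
def Ev (n t : ℕ) : WPair n → ℝ :=
  fun q => if q.1.1.val + 1 ≤ t ∧ t ≤ q.1.2.val then 1 else 0

lemma ent_Ev {n : ℕ} (t i j : ℕ) :
    ent n (Ev n t) i j =
      if 1 ≤ i ∧ i < j ∧ j ≤ n ∧ i ≤ t ∧ t < j then 1 else 0 := by
  by_cases h : 1 ≤ i ∧ i < j ∧ j ≤ n
  · rw [ent, dif_pos h]
    show (if (i - 1) + 1 ≤ t ∧ t ≤ j - 1 then (1:ℝ) else 0) = _
    split_ifs <;> first | rfl | omega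
  · rw [ent_invalid _ h]
    rw [if_neg (by omega)]

/-- Generators of the simplicial cone. -/
def Gvv (n p q : ℕ) : WPair n → ℝ :=
  fun w => if w.1.1.val + 1 ≤ p ∧ q ≤ w.1.2.val then -1 else 0

lemma ent_Gvv {n : ℕ} (p q i j : ℕ) :
    ent n (Gvv n p q) i j =
      if 1 ≤ i ∧ i < j ∧ j ≤ n ∧ i ≤ p ∧ q < j then -1 else 0 := by
  by_cases h : 1 ≤ i ∧ i < j ∧ j ≤ n
  · rw [ent, dif_pos h]
    show (if (i - 1) + 1 ≤ p ∧ q ≤ j - 1 then (-1:ℝ) else 0) = _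
    split_ifs <;> first | rfl | omega
  · rw [ent_invalid _ h]
    rw [if_neg (by omega)]

lemma Gvv_diag {n : ℕ} {p q : ℕ} (hpq : p < q) (i : ℕ) :
    ent n (Gvv n p q) i (i+1) = 0 := by
  rw [ent_Gvv, if_neg (by omega)]

lemma Dv_Gvv {n : ℕ} {p q p' q' : ℕ} (hp : 1 ≤ p) (hpq : p < q) (hq : q + 1 ≤ n)
    (hp' : 1 ≤ p') (hpq' : p' < q') (hq' : q' + 1 ≤ n) :
    Dv n p' q' (Gvv n p q) = if p' = p ∧ q' = q then 1 else 0 := by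
  unfold Dv
  rw [ent_Gvv, ent_Gvv, ent_Gvv, ent_Gvv]
  split_ifs <;> first | (exfalso; omega) | norm_num

lemma Gvv_mem_C0 {n p q : ℕ} (hp : 1 ≤ p) (hpq : p < q) (hq : q + 1 ≤ n) :
    Gvv n p q ∈ C0set n := by
  refine ⟨(mem_K_iff _).2 fun p' q' h1 h2 h3 => ?_, fun i _ _ => Gvv_diag hpq i⟩
  rw [Dv_Gvv hp hpq hq h1 h2 h3]
  split_ifs <;> norm_num

lemma Ev_mem_Lset {n t : ℕ} : Ev n t ∈ Lset n := by
  intro i j h1 h2 h3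
  rw [ent_Ev]
  have hcong : ∀ s ∈ Finset.Ico i j, ent n (Ev n t) s (s+1) = if s = t then (1:ℝ) else 0 := by
    intro s hs
    rw [Finset.mem_Ico] at hs
    rw [ent_Ev]
    split_ifs <;> first | rfl | omega
  rw [Finset.sum_congr rfl hcong, Finset.sum_ite_eq' (Finset.Ico i j) t (fun _ => (1:ℝ))]
  simp only [Finset.mem_Ico]
  split_ifs <;> first | rfl | omega

/-- The submodule with carrier `Lset`. -/
def Lsub (n : ℕ) : Submodule ℝ (WPair n → ℝ) where
  carrier := Lset n
  add_mem' := by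
    intro a b ha hb i j h1 h2 h3
    rw [ent_add, ha i j h1 h2 h3, hb i j h1 h2 h3, ← Finset.sum_add_distrib]
    exact Finset.sum_congr rfl fun t _ => (ent_add a b t (t+1)).symm
  zero_mem' := by
    intro i j h1 h2 h3
    rw [ent_zero]
    exact (Finset.sum_eq_zero fun t _ => ent_zero t (t+1)).symm
  smul_mem' := by
    intro c a ha i j h1 h2 h3
    rw [ent_smul, ha i j h1 h2 h3, Finset.mul_sum]
    exact Finset.sum_congr rfl fun t _ => (ent_smul c a t (t+1)).symm

/-- Expansion of an element of `Lset` in the basis `Ev`. -/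
lemma lset_expansion {n : ℕ} {l : WPair n → ℝ} (hl : l ∈ Lset n) :
    l = ∑ t ∈ Finset.Icc 1 (n-1), ent n l t (t+1) • Ev n t := by
  apply eq_of_ent_eq
  intro i j
  rw [ent_sum]
  by_cases h : 1 ≤ i ∧ i < j ∧ j ≤ n
  · obtain ⟨h1, h2, h3⟩ := h
    rw [lset_ent hl h1 (le_of_lt h2) h3]
    have hcong : ∀ t ∈ Finset.Icc 1 (n-1),
        ent n (ent n l t (t+1) • Ev n t) i j
          = if t ∈ Finset.Ico i j then ent n l t (t+1) else 0 := by
      intro t ht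
      rw [Finset.mem_Icc] at ht
      rw [ent_smul, ent_Ev]
      simp only [Finset.mem_Ico]
      split_ifs <;> first | (exfalso; omega) | ring1
    rw [Finset.sum_congr rfl hcong, Finset.sum_ite_mem]
    congr 1
    ext t
    simp only [Finset.mem_inter, Finset.mem_Icc, Finset.mem_Ico]
    omega
  · rw [ent_invalid _ h]
    exact (Finset.sum_eq_zero fun t _ => by
      rw [ent_smul, ent_invalid _ h, mul_zero]).symm

/-- The index set for the generators. -/
def Iidx (n : ℕ) : Finset (ℕ × ℕ) :=
  (Finset.Icc 1 (n-1) ×ˢ Finset.Icc 1 (n-1)).filter fun w => w.1 < w.2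

lemma mem_Iidx {n : ℕ} {w : ℕ × ℕ} :
    w ∈ Iidx n ↔ 1 ≤ w.1 ∧ w.1 < w.2 ∧ w.2 ≤ n - 1 := by
  simp only [Iidx, Finset.mem_filter, Finset.mem_product, Finset.mem_Icc]
  omega

lemma card_Iidx {n : ℕ} (hn : 2 ≤ n) : (Iidx n).card = (n-1) * (n-2) / 2 := by
  rw [Finset.card_eq_sum_card_fiberwise
    (f := Prod.snd) (t := Finset.Icc 1 (n-1))
    (fun w hw => by rw [Finset.mem_coe, mem_Iidx] at hw; rw [Finset.mem_coe, Finset.mem_Icc]; omega)]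
  have hfib : ∀ q ∈ Finset.Icc 1 (n-1),
      ((Iidx n).filter fun w => w.2 = q).card = q - 1 := by
    intro q hq
    rw [Finset.mem_Icc] at hq
    have himg : ((Iidx n).filter fun w => w.2 = q)
        = (Finset.Icc 1 (q-1)).image (fun p => (p, q)) := by
      ext w
      simp only [Finset.mem_filter, mem_Iidx, Finset.mem_image, Finset.mem_Icc, Prod.ext_iff]
      constructor
      · rintro ⟨⟨a, b, c⟩, d⟩
        exact ⟨w.1, ⟨by omega, by omega⟩, rfl, by omega⟩
      · rintro ⟨p, hp, rfl, rfl⟩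
        refine ⟨⟨by omega, by omega, by omega⟩, rfl⟩
    rw [himg, Finset.card_image_of_injective _ (fun a b hab => (Prod.ext_iff.1 hab).1),
      Nat.card_Icc]
    omega
  rw [Finset.sum_congr rfl hfib]
  rw [show Finset.Icc 1 (n-1) = Finset.Ico 1 n by
        ext t; simp only [Finset.mem_Icc, Finset.mem_Ico]; omega]
  rw [Finset.sum_Ico_eq_sum_range]
  have hc : ∀ i ∈ Finset.range (n - 1), (1 + i) - 1 = i := fun i _ => by omega
  rw [Finset.sum_congr rfl hc, Finset.sum_range_id, show n - 1 - 1 = n - 2 from by omega]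

lemma Gvv_injOn {n : ℕ} : ∀ w ∈ Iidx n, ∀ w' ∈ Iidx n,
    Gvv n w.1 w.2 = Gvv n w'.1 w'.2 → w = w' := by
  intro w hw w' hw' h
  rw [mem_Iidx] at hw hw'
  have := congrArg (Dv n w.1 w.2) h
  rw [Dv_Gvv (by omega) hw.2.1 (by omega) (by omega) hw.2.1 (by omega),
      Dv_Gvv (by omega) hw'.2.1 (by omega) (by omega) hw.2.1 (by omega)] at this
  rw [if_pos ⟨rfl, rfl⟩] at this
  by_contra hne
  rw [if_neg (fun hc => hne (Prod.ext hc.1 hc.2))] at this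
  norm_num at this

lemma Ev_injOn {n : ℕ} : ∀ t ∈ Finset.Icc 1 (n-1), ∀ t' ∈ Finset.Icc 1 (n-1),
    Ev n t = Ev n t' → t = t' := by
  intro t ht t' ht' h
  rw [Finset.mem_Icc] at ht ht'
  have := congrArg (fun v => ent n v t (t+1)) h
  simp only [ent_Ev] at this
  rw [if_pos ⟨by omega, by omega, by omega, by omega, by omega⟩] at this
  by_contra hne
  rw [if_neg (by omega)] at this
  norm_num at this

/-- Inversion: every element of `C0set` is the `Dv`-combination of the generators. -/
lemma c0_expansion {n : ℕ} {x : WPair n → ℝ} (hx : x ∈ C0set n) :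
    x = ∑ w ∈ Iidx n, Dv n w.1 w.2 x • Gvv n w.1 w.2 := by
  have hy : x - ∑ w ∈ Iidx n, Dv n w.1 w.2 x • Gvv n w.1 w.2 = 0 := by
    apply eq_zero_of_ent_zero
    apply master
    · intro i h1 h2
      rw [ent_sub, hx.2 i h1 h2, ent_sum, Finset.sum_eq_zero, sub_zero]
      intro w hw
      rw [mem_Iidx] at hw
      rw [ent_smul, Gvv_diag hw.2.1, mul_zero]
    · intro p q h1 h2 h3
      rw [Dv_sub, Dv_sum]
      have hcong : ∀ w ∈ Iidx n,
          Dv n p q (Dv n w.1 w.2 x • Gvv n w.1 w.2)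
            = if (p, q) = w then Dv n w.1 w.2 x else 0 := by
        intro w hw
        rw [mem_Iidx] at hw
        rw [Dv_smul, Dv_Gvv (by omega) hw.2.1 (by omega) h1 h2 h3]
        by_cases he : (p, q) = w
        · rw [if_pos ⟨(Prod.ext_iff.1 he).1, (Prod.ext_iff.1 he).2⟩, if_pos he, mul_one]
        · rw [if_neg (fun hc => he (Prod.ext hc.1 hc.2)), if_neg he, mul_zero]
      rw [Finset.sum_congr rfl hcong, Finset.sum_ite_eq (Iidx n) (p, q) (fun w => Dv n w.1 w.2 x)]
      rw [if_pos (mem_Iidx.2 ⟨h1, h2, by omega⟩)]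
      simp
  exact sub_eq_zero.1 hy

lemma Ev_li {n : ℕ} :
    LinearIndependent ℝ fun t : (↑(Finset.Icc 1 (n-1)) : Set ℕ) => Ev n (t : ℕ) := by
  rw [linearIndependent_iff']
  intro s g hsum i hi
  have hmem : (i : ℕ) ∈ Finset.Icc 1 (n-1) := Finset.mem_coe.1 i.2
  rw [Finset.mem_Icc] at hmem
  have h0 := congrArg (fun v => ent n v (i : ℕ) ((i : ℕ) + 1)) hsum
  simp only [ent_sum, ent_smul, ent_zero, ent_Ev] at h0
  rw [Finset.sum_eq_single i (fun b _ hbne => by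
        rw [if_neg, mul_zero]
        intro hc
        exact hbne (Subtype.ext (by omega)))
      (fun h => absurd hi h)] at h0
  rw [if_pos ⟨by omega, by omega, by omega, le_refl _, by omega⟩, mul_one] at h0
  exact h0

lemma Gvv_li {n : ℕ} :
    LinearIndependent ℝ fun w : (↑(Iidx n) : Set (ℕ × ℕ)) => Gvv n (w : ℕ × ℕ).1 (w : ℕ × ℕ).2 := by
  rw [linearIndependent_iff']
  intro s g hsum i hi
  have hmem : (i : ℕ × ℕ) ∈ Iidx n := Finset.mem_coe.1 i.2
  rw [mem_Iidx] at hmem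
  have h0 := congrArg (Dv n (i : ℕ × ℕ).1 (i : ℕ × ℕ).2) hsum
  have hz : Dv n (i : ℕ × ℕ).1 (i : ℕ × ℕ).2 (0 : WPair n → ℝ) = 0 := by
    unfold Dv; rw [ent_zero, ent_zero, ent_zero, ent_zero]; ring
  rw [Dv_sum, hz] at h0
  have hcong : ∀ b ∈ s,
      Dv n (i : ℕ × ℕ).1 (i : ℕ × ℕ).2 (g b • Gvv n (b : ℕ × ℕ).1 (b : ℕ × ℕ).2)
        = if b = i then g b else 0 := by
    intro b hb
    have hbmem : (b : ℕ × ℕ) ∈ Iidx n := Finset.mem_coe.1 b.2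
    rw [mem_Iidx] at hbmem
    rw [Dv_smul, Dv_Gvv (by omega) hbmem.2.1 (by omega) (by omega) hmem.2.1 (by omega)]
    by_cases he : b = i
    · rw [if_pos, if_pos he, mul_one]
      exact ⟨by rw [he], by rw [he]⟩
    · rw [if_neg, if_neg he, mul_zero]
      intro hc
      exact he (Subtype.ext (Prod.ext hc.1.symm hc.2.symm))
  rw [Finset.sum_congr rfl hcong, Finset.sum_ite_eq' s i (fun b => g b), if_pos hi] at h0
  exact h0

/-- The interior point. -/
def Xint (n : ℕ) : WPair n → ℝ :=
  fun q => -(((q.1.2.val - q.1.1.val : ℕ) : ℝ) - 1)^2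

lemma ent_Xint {n : ℕ} {i j : ℕ} (h : 1 ≤ i ∧ i < j ∧ j ≤ n) :
    ent n (Xint n) i j = -(((j - i : ℕ) : ℝ) - 1)^2 := by
  rw [ent, dif_pos h]
  show -((((j-1) - (i-1) : ℕ) : ℝ) - 1)^2 = _
  rw [show (j-1) - (i-1) = j - i from by omega]

lemma ball_subset_K {n : ℕ} :
    Metric.ball (Xint n) (1/4) ⊆ Kcone n := by
  intro y hy
  rw [Metric.mem_ball] at hy
  have key : ∀ i j, |ent n y i j - ent n (Xint n) i j| < 1/4 := by
    intro i j
    by_cases h : 1 ≤ i ∧ i < j ∧ j ≤ n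
    · rw [ent, dif_pos h, ent, dif_pos h]
      have := (dist_pi_lt_iff (by norm_num : (0:ℝ) < 1/4)).1 hy
        ⟨(⟨i - 1, by omega⟩, ⟨j - 1, by omega⟩), by simp only [Fin.mk_lt_mk]; omega⟩
      rwa [Real.dist_eq] at this
    · rw [ent_invalid _ h, ent_invalid _ h]
      norm_num
  constructor
  · intro i h1 h2
    have k1 := key i (i+2)
    have k2 := key i (i+1)
    have k3 := key (i+1) (i+2)
    rw [ent_Xint ⟨h1, by omega, by omega⟩, show i+2-i = 2 from by omega] at k1
    rw [ent_Xint ⟨h1, by omega, by omega⟩, show i+1-i = 1 from by omega] at k2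
    rw [ent_Xint ⟨by omega, by omega, by omega⟩, show i+2-(i+1) = 1 from by omega] at k3
    norm_num at k1 k2 k3
    rw [abs_lt] at k1 k2 k3
    linarith
  · intro i j h1 h2 h3
    have k1 := key i (j+1)
    have k2 := key (i+1) j
    have k3 := key i j
    have k4 := key (i+1) (j+1)
    rw [ent_Xint ⟨h1, by omega, by omega⟩, show j+1-i = (j-i)+1 from by omega] at k1
    rw [ent_Xint ⟨by omega, by omega, by omega⟩, show j-(i+1) = (j-i)-1 from by omega] at k2
    rw [ent_Xint ⟨h1, by omega, by omega⟩] at k3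
    rw [ent_Xint ⟨by omega, by omega, by omega⟩, show j+1-(i+1) = j-i from by omega] at k4
    set k : ℕ := j - i with hk
    have hk2 : 2 ≤ k := by omega
    have c1 : ((k + 1 : ℕ) : ℝ) = (k : ℝ) + 1 := by push_cast; ring
    have c2 : ((k - 1 : ℕ) : ℝ) = (k : ℝ) - 1 := by
      rw [Nat.cast_sub (by omega)]; norm_num
    rw [c1] at k1
    rw [c2] at k2
    rw [abs_lt] at k1 k2 k3 k4
    nlinarith [k1.1, k1.2, k2.1, k2.2, k3.1, k3.2, k4.1, k4.2]

lemma interior_nonempty {n : ℕ} : (interior (Kcone n)).Nonempty := by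
  refine ⟨Xint n, mem_interior.2 ⟨Metric.ball (Xint n) (1/4), ball_subset_K, Metric.isOpen_ball,
    Metric.mem_ball_self (by norm_num)⟩⟩

/-- Coefficient extraction function for the generators. -/
noncomputable def Cf (n : ℕ) (x : WPair n → ℝ) (g : WPair n → ℝ) : ℝ :=
  if h : ∃ w, w ∈ Iidx n ∧ Gvv n w.1 w.2 = g then Dv n h.choose.1 h.choose.2 x else 0

lemma Cf_val {n : ℕ} {x : WPair n → ℝ} {w : ℕ × ℕ} (hw : w ∈ Iidx n) :
    Cf n x (Gvv n w.1 w.2) = Dv n w.1 w.2 x := by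
  have hex : ∃ w', w' ∈ Iidx n ∧ Gvv n w'.1 w'.2 = Gvv n w.1 w.2 := ⟨w, hw, rfl⟩
  rw [Cf, dif_pos hex]
  obtain ⟨hw', heq⟩ := hex.choose_spec
  rw [Gvv_injOn _ hw' _ hw heq]

theorem stmt9 (n : ℕ) (hn : 2 ≤ n) :
    Kcone n = Lset n + C0set n ∧
    Lset n ∩ C0set n ⊆ {0} ∧
    {x | x ∈ Kcone n ∧ -x ∈ Kcone n} = Lset n ∧
    (∃ B : Finset (WPair n → ℝ), B.card = n - 1 ∧
      LinearIndependent ℝ ((↑) : B → (WPair n → ℝ)) ∧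
      Lset n = (Submodule.span ℝ (B : Set (WPair n → ℝ)) : Set (WPair n → ℝ))) ∧
    (∃ G : Finset (WPair n → ℝ), G.card = (n-1)*(n-2)/2 ∧
      LinearIndependent ℝ ((↑) : G → (WPair n → ℝ)) ∧
      C0set n = {x | ∃ c : (WPair n → ℝ) → ℝ, (∀ g ∈ G, 0 ≤ c g) ∧
        x = ∑ g ∈ G, c g • g}) ∧
    (interior (Kcone n)).Nonempty := by
  classical
  refine ⟨?_, ?_, ?_, ?_, ?_, interior_nonempty⟩
  · -- Kcone = Lset + C0set
    ext x
    constructor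
    · intro hx
      refine Set.mem_add.2 ⟨Pl n x, Pl_mem_Lset x, x - Pl n x, ⟨?_, ?_⟩, by abel⟩
      · exact (mem_K_iff _).2 fun p q h1 h2 h3 => by
          rw [Dv_sub, lset_Dv (Pl_mem_Lset x) h1 h2 h3, sub_zero]
          exact (mem_K_iff _).1 hx p q h1 h2 h3
      · intro i hi1 hi2
        rw [ent_sub, Pl_diag x hi1 hi2, sub_self]
    · intro hx
      obtain ⟨l, hl, c, hc, rfl⟩ := Set.mem_add.1 hx
      exact (mem_K_iff _).2 fun p q h1 h2 h3 => by
        rw [Dv_add, lset_Dv hl h1 h2 h3, zero_add]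
        exact (mem_K_iff _).1 hc.1 p q h1 h2 h3
  · -- Lset ∩ C0set ⊆ {0}
    rintro x ⟨hL, hC⟩
    have hx0 : x = 0 := eq_zero_of_ent_zero fun i j => by
      by_cases h : 1 ≤ i ∧ i < j ∧ j ≤ n
      · rw [hL i j h.1 h.2.1 h.2.2]
        exact Finset.sum_eq_zero fun t ht => by
          rw [Finset.mem_Ico] at ht
          exact hC.2 t (by omega) (by omega)
      · exact ent_invalid _ h
    exact Set.mem_singleton_iff.2 hx0
  · -- lineality space
    ext x
    simp only [Set.mem_setOf_eq]
    constructor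
    · rintro ⟨h1, h2⟩
      have hD0 : ∀ p q, 1 ≤ p → p < q → q + 1 ≤ n → Dv n p q x = 0 := by
        intro p q a b c
        have u1 := (mem_K_iff _).1 h1 p q a b c
        have u2 := (mem_K_iff _).1 h2 p q a b c
        rw [Dv_neg] at u2
        linarith
      have hx : x = Pl n x := by
        have hz := eq_zero_of_ent_zero (master (y := x - Pl n x)
          (fun i hi1 hi2 => by rw [ent_sub, Pl_diag x hi1 hi2, sub_self])
          (fun p q a b c => by
            rw [Dv_sub, hD0 p q a b c, lset_Dv (Pl_mem_Lset x) a b c, sub_zero]))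
        rwa [sub_eq_zero] at hz
      rw [hx]
      exact Pl_mem_Lset x
    · intro hl
      refine ⟨(mem_K_iff _).2 fun p q a b c => by rw [lset_Dv hl a b c],
              (mem_K_iff _).2 fun p q a b c => by rw [Dv_neg, lset_Dv hl a b c, neg_zero]⟩
  · -- the basis B of L
    refine ⟨(Finset.Icc 1 (n-1)).image (Ev n), ?_, ?_, ?_⟩
    · rw [Finset.card_image_of_injOn
        (fun a ha b hb h => Ev_injOn a (Finset.mem_coe.1 ha) b (Finset.mem_coe.1 hb) h),
        Nat.card_Icc]
      omega
    · have h1 := (linearIndepOn_iff_image (R := ℝ) (f := Ev n) (s := (↑(Finset.Icc 1 (n-1)) : Set ℕ))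
        (fun a ha b hb h => Ev_injOn a (Finset.mem_coe.1 ha) b (Finset.mem_coe.1 hb) h)).1 (Ev_li (n := n))
      rw [← Finset.coe_image] at h1
      exact h1
    · ext x
      simp only [SetLike.mem_coe]
      constructor
      · intro hx
        rw [lset_expansion hx]
        exact Submodule.sum_mem _ fun t ht => Submodule.smul_mem _ _
          (Submodule.subset_span
            (by rw [Finset.coe_image]; exact Set.mem_image_of_mem _ (Finset.mem_coe.2 ht)))
      · intro hx
        exact (Submodule.span_le (p := Lsub n)).2
          (fun g hg => by
            rw [Finset.coe_image] at hg
            obtain ⟨t, _, rfl⟩ := hg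
            exact Ev_mem_Lset) hx
  · -- the generators G of the simplicial cone
    refine ⟨(Iidx n).image (fun w => Gvv n w.1 w.2), ?_, ?_, ?_⟩
    · rw [Finset.card_image_of_injOn
        (fun a ha b hb h => Gvv_injOn a (Finset.mem_coe.1 ha) b (Finset.mem_coe.1 hb) h),
        card_Iidx hn]
    · have h1 := (linearIndepOn_iff_image (R := ℝ) (f := fun w : ℕ × ℕ => Gvv n w.1 w.2)
        (s := (↑(Iidx n) : Set (ℕ × ℕ)))
        (fun a ha b hb h => Gvv_injOn a (Finset.mem_coe.1 ha) b (Finset.mem_coe.1 hb) h)).1 (Gvv_li (n := n))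
      rw [← Finset.coe_image] at h1
      exact h1
    · ext x
      simp only [Set.mem_setOf_eq]
      constructor
      · intro hx
        refine ⟨Cf n x, ?_, ?_⟩
        · intro g hg
          obtain ⟨w, hw, rfl⟩ := Finset.mem_image.1 hg
          rw [Cf_val hw]
          have hwm := mem_Iidx.1 hw
          exact (mem_K_iff _).1 hx.1 w.1 w.2 (by omega) hwm.2.1 (by omega)
        · rw [Finset.sum_image
            (fun a ha b hb h => Gvv_injOn a ha b hb h)]
          rw [Finset.sum_congr rfl (fun w hw => by rw [Cf_val hw])]
          exact c0_expansion hx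
      · rintro ⟨c, hc, rfl⟩
        constructor
        · refine (mem_K_iff _).2 fun p q a b cc => ?_
          rw [Dv_sum]
          refine Finset.sum_nonneg fun g hg => ?_
          have hg' := hg
          obtain ⟨w, hw, rfl⟩ := Finset.mem_image.1 hg
          have hwm := mem_Iidx.1 hw
          rw [Dv_smul, Dv_Gvv (by omega) hwm.2.1 (by omega) a b cc]
          have hnn := hc _ hg'
          split_ifs
          · simpa using hnn
          · simp
        · intro i hi1 hi2
          rw [ent_sum]
          refine Finset.sum_eq_zero fun g hg => ?_
          obtain ⟨w, hw, rfl⟩ := Finset.mem_image.1 hg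
          rw [ent_smul, Gvv_diag (mem_Iidx.1 hw).2.1, mul_zero]
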